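/- Let p be a distribution over top-k-lists on [n] and ε > 0. Set m = ⌈(1+1/ε)(k−1)⌉. Let σ' sort candidates by nonincreasing Score, and let σ be the permutation minimizing K(·,p) among permutations that agree with σ' on the set of candidates with rank > m in σ' (i.e., obtained by permuting only the first m candidates of σ'). Then K(σ,p) ≤ (1+ε)·min_{σ*} K(σ*,p). -/

import Mathlib

open Finset

/-- A top-`k`-list on `[n]`. -/
def IsTopList (n k : ℕ) (π : Fin n → ℕ∞) : Prop :=
  (∀ i, π i ≠ ⊤ → 1 ≤ π i ∧ π i ≤ (k : ℕ∞)) ∧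
  (∀ r : ℕ, 1 ≤ r → r ≤ k → ∃! i, π i = (r : ℕ∞))

/-- Generalized Kendall tau distance between a permutation and a top-list. -/
def kendallGen {n : ℕ} (σ : Equiv.Perm (Fin n)) (π : Fin n → ℕ∞) : ℕ :=
  (Finset.univ.filter (fun q : Fin n × Fin n => σ q.2 < σ q.1 ∧ π q.1 < π q.2)).card

/-- Score of candidate `i`. -/
def score {n m : ℕ} (w : Fin m → ℝ) (π : Fin m → Fin n → ℕ∞) (i : Fin n) : ℝ :=
  ∑ v, if π v i ≠ ⊤ then w v else 0

/-- Average generalized Kendall tau cost of `σ` against the voting profile. -/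
def kendallCost {n m : ℕ} (w : Fin m → ℝ) (π : Fin m → Fin n → ℕ∞)
    (σ : Equiv.Perm (Fin n)) : ℝ :=
  ∑ v, w v * (kendallGen σ (π v) : ℝ)

/-! ### Auxiliary definitions -/

/-- Weighted probability that `i` is ranked (strictly) before `j`. -/
def pairP {n mm : ℕ} (w : Fin mm → ℝ) (π : Fin mm → Fin n → ℕ∞) (i j : Fin n) : ℝ :=
  ∑ v, if π v i < π v j then w v else 0

/-- Weighted probability that both `i` and `j` are ranked. -/
def bothF {n mm : ℕ} (w : Fin mm → ℝ) (π : Fin mm → Fin n → ℕ∞) (i j : Fin n) : ℝ :=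
  ∑ v, if (π v i ≠ ⊤ ∧ π v j ≠ ⊤) then w v else 0

/-! ### Basic lemmas -/

lemma STA.kendallGen_real {n : ℕ} (σ : Equiv.Perm (Fin n)) (π₀ : Fin n → ℕ∞) :
    (kendallGen σ π₀ : ℝ) = ∑ i : Fin n, ∑ j : Fin n,
      if σ j < σ i ∧ π₀ i < π₀ j then (1:ℝ) else 0 := by
  rw [kendallGen, Finset.card_filter]
  push_cast
  rw [← Finset.univ_product_univ, Finset.sum_product]

lemma STA.cost_eq {n mm : ℕ} (w : Fin mm → ℝ) (π : Fin mm → Fin n → ℕ∞)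
    (σ : Equiv.Perm (Fin n)) :
    kendallCost w π σ = ∑ i : Fin n, ∑ j : Fin n,
      if σ j < σ i then pairP w π i j else 0 := by
  unfold kendallCost
  simp_rw [STA.kendallGen_real, Finset.mul_sum]
  rw [Finset.sum_comm]
  refine Finset.sum_congr rfl fun i _ => ?_
  rw [Finset.sum_comm]
  refine Finset.sum_congr rfl fun j _ => ?_
  rw [pairP]
  by_cases h : σ j < σ i
  · simp only [h, if_true, true_and]
    exact Finset.sum_congr rfl fun v _ => by split_ifs <;> simp
  · simp [h]

lemma STA.enat_exists (x : ℕ∞) (h : x ≠ ⊤) : ∃ r : ℕ, x = (r:ℕ∞) := by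
  lift x to ℕ using h; exact ⟨x, rfl⟩

lemma STA.card_finite_eq {n k : ℕ} {π₀ : Fin n → ℕ∞} (h : IsTopList n k π₀) :
    (univ.filter fun i => π₀ i ≠ ⊤).card = k := by
  obtain ⟨h1, h2⟩ := h
  rw [show k = (Finset.Icc 1 k).card by simp]
  apply Finset.card_bij (fun i _ => (π₀ i).toNat)
  · intro i hi
    simp only [mem_filter, mem_univ, true_and] at hi
    obtain ⟨r, hr⟩ := STA.enat_exists _ hi
    obtain ⟨hl, hu⟩ := h1 i hi
    rw [hr] at hl hu ⊢
    simp only [Finset.mem_Icc, show ((r:ℕ∞)).toNat = r from rfl]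
    exact ⟨by exact_mod_cast hl, by exact_mod_cast hu⟩
  · intro a ha b hb hab
    simp only [mem_filter, mem_univ, true_and] at ha hb
    obtain ⟨r, hr⟩ := STA.enat_exists _ ha
    obtain ⟨s₀, hs⟩ := STA.enat_exists _ hb
    rw [hr, hs, show ((r:ℕ∞)).toNat = r from rfl, show ((s₀:ℕ∞)).toNat = s₀ from rfl] at hab
    subst hab
    obtain ⟨hl, hu⟩ := h1 a ha
    rw [hr] at hl hu
    obtain ⟨i, -, huniq⟩ := h2 r (by exact_mod_cast hl) (by exact_mod_cast hu)
    exact (huniq a hr).trans (huniq b hs).symm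
  · intro r hr
    simp only [Finset.mem_Icc] at hr
    obtain ⟨i, hi, -⟩ := h2 r hr.1 hr.2
    refine ⟨i, ?_, ?_⟩
    · simp only [mem_filter, mem_univ, true_and, hi]
      exact (ENat.coe_ne_top r)
    · rw [hi]; simp

section Lemmas
variable {n mm k : ℕ} (w : Fin mm → ℝ) (π : Fin mm → Fin n → ℕ∞)

lemma STA.score_nonneg (hw : ∀ v, 0 ≤ w v) (i : Fin n) : 0 ≤ score w π i :=
  Finset.sum_nonneg fun v _ => by split_ifs; exacts [hw v, le_refl 0]

lemma STA.bothF_nonneg (hw : ∀ v, 0 ≤ w v) (i j : Fin n) : 0 ≤ bothF w π i j :=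
  Finset.sum_nonneg fun v _ => by split_ifs; exacts [hw v, le_refl 0]

lemma STA.vote_ineq (x : ℝ) (hx : 0 ≤ x) (a b : ℕ∞) :
    (if a < b then x else 0) - (if b < a then x else 0) ≤
      (if (a ≠ ⊤ ∧ b ≠ ⊤) then x else 0) + (if a ≠ ⊤ then x else 0) - (if b ≠ ⊤ then x else 0) := by
  by_cases hb : b = ⊤
  · subst hb
    simp only [ne_eq, not_true_eq_false, and_false, if_false, not_top_lt, lt_top_iff_ne_top]
    split_ifs <;> linarith
  · by_cases ha : a = ⊤
    · subst ha
      simp only [ne_eq, not_top_lt, not_true_eq_false, false_and, if_false, hb,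
        lt_top_iff_ne_top, not_false_eq_true, if_true]
      linarith
    · rw [if_pos (show a ≠ ⊤ ∧ b ≠ ⊤ from ⟨ha, hb⟩), if_pos ha, if_pos hb]
      have h1 : ¬(a < b ∧ b < a) := fun h => absurd (h.1.trans h.2) (lt_irrefl a)
      split_ifs with u v v <;> first | linarith | (exfalso; exact h1 ⟨u, v⟩)

lemma STA.pairP_sub_le (hw : ∀ v, 0 ≤ w v) (i j : Fin n) :
    pairP w π i j - pairP w π j i ≤ bothF w π i j + score w π i - score w π j := by
  unfold pairP bothF score
  rw [← Finset.sum_sub_distrib, ← Finset.sum_add_distrib, ← Finset.sum_sub_distrib]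
  exact Finset.sum_le_sum fun v _ => STA.vote_ineq (w v) (hw v) (π v i) (π v j)

lemma STA.sumF_le (hw : ∀ v, 0 ≤ w v)
    (hcard : ∀ v, (univ.filter fun i => π v i ≠ ⊤).card = k) (i : Fin n) :
    ∑ j ∈ univ.erase i, bothF w π i j ≤ ((k:ℝ) - 1) * score w π i := by
  unfold bothF score
  rw [Finset.sum_comm, Finset.mul_sum]
  refine Finset.sum_le_sum fun v _ => ?_
  by_cases hi : π v i = ⊤
  · simp [hi]
  · rw [if_pos hi]
    have heq : ∀ j, ((π v i ≠ ⊤ ∧ π v j ≠ ⊤)) ↔ (π v j ≠ ⊤) := fun j => by simp [hi]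
    simp_rw [heq]
    rw [← Finset.sum_filter, Finset.sum_const, Finset.filter_erase,
      Finset.card_erase_of_mem (by simp [hi]), hcard v]
    have hk1 : 1 ≤ k := by
      have hm : i ∈ univ.filter fun i => π v i ≠ ⊤ := by simp [hi]
      have h2 := Finset.card_pos.mpr ⟨i, hm⟩
      have h3 := hcard v
      omega
    rw [nsmul_eq_mul]
    push_cast [hk1]
    exact le_refl _

end Lemmas

lemma STA.card_lt_fin {n : ℕ} (c : Fin n) :
    (univ.filter fun x : Fin n => x < c).card = (c:ℕ) := by
  have h0 : (univ.filter fun x : Fin n => x < c).card = (Finset.range c).card := by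
    refine Finset.card_bij
      (fun (x : Fin n) (_ : x ∈ univ.filter fun x : Fin n => x < c) => (x:ℕ)) ?_ ?_ ?_
    · intro x hx; simp only [mem_filter] at hx; simpa [Finset.mem_range] using hx.2
    · intro a _ b _ hab; exact Fin.val_injective hab
    · intro m hm
      simp only [Finset.mem_range] at hm
      exact ⟨⟨m, hm.trans c.isLt⟩,
        Finset.mem_filter.mpr ⟨Finset.mem_univ _, by simpa [Fin.lt_def] using hm⟩, rfl⟩
  simpa using h0

lemma STA.card_rank {n : ℕ} (τ : Equiv.Perm (Fin n)) (i : Fin n) :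
    (univ.filter fun j => τ j < τ i).card = (τ i : ℕ) := by
  rw [← STA.card_lt_fin (τ i)]
  refine Finset.card_bij (fun j (_ : j ∈ univ.filter fun j => τ j < τ i) => τ j) ?_ ?_ ?_
  · intro j hj; simp only [mem_filter, mem_univ, true_and] at hj ⊢; exact hj
  · intro a _ b _ hab; exact τ.injective hab
  · intro x hx
    simp only [mem_filter, mem_univ, true_and] at hx
    exact ⟨τ.symm x, by simpa using hx, by simp⟩

/-- Per-vote lower bound. -/
lemma STA.vote_lower {n k M : ℕ} (τ : Equiv.Perm (Fin n)) (π₀ : Fin n → ℕ∞)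
    (hcard : (univ.filter fun i => π₀ i ≠ ⊤).card = k) :
    ∑ i : Fin n, (if (M ≤ (τ i : ℕ) ∧ π₀ i ≠ ⊤) then ((M:ℝ) + 1 - k) else 0)
      ≤ (kendallGen τ π₀ : ℝ) := by
  classical
  set Q := (Finset.univ.filter (fun q : Fin n × Fin n => τ q.2 < τ q.1 ∧ π₀ q.1 < π₀ q.2))
    with hQ
  have hQcard : (kendallGen τ π₀ : ℕ) = ∑ i : Fin n, (Q.filter fun q => q.1 = i).card :=
    Finset.card_eq_sum_card_fiberwise (fun q _ => Finset.mem_univ q.1)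
  have hcast : ((kendallGen τ π₀ : ℕ) : ℝ)
      = ∑ i : Fin n, ((Q.filter fun q => q.1 = i).card : ℝ) := by
    rw [hQcard]; push_cast; rfl
  rw [hcast]
  refine Finset.sum_le_sum fun i _ => ?_
  by_cases hc : M ≤ (τ i : ℕ) ∧ π₀ i ≠ ⊤
  · rw [if_pos hc]
    obtain ⟨hM, hfin⟩ := hc
    set Ji := univ.filter (fun j => τ j < τ i ∧ π₀ j = ⊤) with hJi
    set Ki := univ.filter (fun j => τ j < τ i ∧ π₀ j ≠ ⊤) with hKi
    have hsub : Ji.image (fun j => (i, j)) ⊆ Q.filter fun q => q.1 = i := by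
      intro q hq
      simp only [Finset.mem_image] at hq
      obtain ⟨j, hj, rfl⟩ := hq
      simp only [hJi, mem_filter, mem_univ, true_and] at hj
      exact Finset.mem_filter.mpr ⟨Finset.mem_filter.mpr ⟨Finset.mem_univ _, hj.1,
        by rw [hj.2]; exact lt_top_iff_ne_top.mpr hfin⟩, rfl⟩
    have himg : (Ji.image (fun j => (i, j))).card = Ji.card :=
      Finset.card_image_of_injective _ (fun a b h => (Prod.mk.injEq _ _ _ _).mp h |>.2)
    have h1 : Ji.card ≤ (Q.filter fun q => q.1 = i).card := himg ▸ Finset.card_le_card hsub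
    have hunion : univ.filter (fun j => τ j < τ i) = Ji ∪ Ki := by
      ext j
      simp only [hJi, hKi, Finset.mem_union, mem_filter, mem_univ, true_and]
      tauto
    have hdisj : Disjoint Ji Ki := by
      rw [Finset.disjoint_left]
      intro a ha hb
      simp only [hJi, hKi, mem_filter, mem_univ, true_and] at ha hb
      exact hb.2 ha.2
    have hKk : Ki.card + 1 ≤ k := by
      have hins : insert i Ki ⊆ univ.filter fun j => π₀ j ≠ ⊤ := by
        intro a ha
        rcases Finset.mem_insert.mp ha with rfl | ha
        · simp [hfin]
        · simp only [hKi, mem_filter, mem_univ, true_and] at ha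
          simp [ha.2]
      have hnotmem : i ∉ Ki := by simp [hKi]
      have hle := Finset.card_le_card hins
      rw [Finset.card_insert_of_notMem hnotmem, hcard] at hle
      exact hle
    have hrank : Ki.card + Ji.card = (τ i : ℕ) := by
      rw [← STA.card_rank τ i, hunion, Finset.card_union_of_disjoint hdisj]
      omega
    have hfinal : (M:ℝ) + 1 - k ≤ (Ji.card : ℝ) := by
      have h2 : M + 1 ≤ Ji.card + k := by omega
      have h3 := (Nat.cast_le (α := ℝ)).mpr h2
      push_cast at h3
      linarith
    exact hfinal.trans (by exact_mod_cast h1)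
  · rw [if_neg hc]
    positivity

lemma STA.perm_filter_card {n M : ℕ} (τ : Equiv.Perm (Fin n)) :
    (univ.filter fun i => M ≤ (τ i : ℕ)).card
      = (univ.filter fun x : Fin n => M ≤ (x:ℕ)).card := by
  refine Finset.card_bij (fun j (_ : j ∈ univ.filter fun i => M ≤ (τ i : ℕ)) => τ j) ?_ ?_ ?_
  · intro j hj; simp only [mem_filter, mem_univ, true_and] at hj ⊢; exact hj
  · intro a _ b _ hab; exact τ.injective hab
  · intro x hx
    simp only [mem_filter, mem_univ, true_and] at hx
    exact ⟨τ.symm x, by simpa using hx, by simp⟩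

lemma STA.sum_le_sum_of_cards {α : Type*} [DecidableEq α] (s t : Finset α) (f : α → ℝ)
    (hcard : s.card = t.card) (hle : ∀ a ∈ s, ∀ b, b ∉ s → f a ≤ f b) :
    ∑ a ∈ s, f a ≤ ∑ b ∈ t, f b := by
  rw [← Finset.sum_inter_add_sum_sdiff s t f, ← Finset.sum_inter_add_sum_sdiff t s f,
    Finset.inter_comm t s]
  have hc2 : (s \ t).card = (t \ s).card := by
    have h1 := Finset.card_inter_add_card_sdiff s t
    have h2 := Finset.card_inter_add_card_sdiff t s
    rw [Finset.inter_comm t s] at h2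
    omega
  have key : ∑ a ∈ s \ t, f a ≤ ∑ b ∈ t \ s, f b := by
    rcases (t \ s).eq_empty_or_nonempty with he | hne
    · have h0 : (s \ t) = ∅ := Finset.card_eq_zero.mp (by rw [hc2, he]; simp)
      rw [h0, he]
    · obtain ⟨b0, hb0, hmin⟩ := Finset.exists_min_image (t \ s) f hne
      calc ∑ a ∈ s \ t, f a ≤ (s \ t).card • f b0 := by
            refine Finset.sum_le_card_nsmul _ _ _ fun a ha => ?_
            exact hle a (Finset.mem_sdiff.mp ha).1 b0 (Finset.mem_sdiff.mp hb0).2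
        _ = (t \ s).card • f b0 := by rw [hc2]
        _ ≤ ∑ b ∈ t \ s, f b := Finset.card_nsmul_le_sum _ _ _ fun b hb => hmin b hb
  linarith

lemma STA.exists_adjust {n : ℕ} (M : ℕ) (σ' σs : Equiv.Perm (Fin n)) :
    ∃ s : Equiv.Perm (Fin n), (∀ i, M ≤ (σ' i : ℕ) → s i = σ' i) ∧
      (∀ i j, s j < s i → σs i < σs j → (M ≤ (σ' i : ℕ) ∧ σ' j < σ' i)) := by
  classical
  set H : Finset (Fin n) := univ.filter (fun i => (σ' i : ℕ) < M) with hH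
  set r : Fin n → ℕ := fun i => (H.filter (fun j => σs j < σs i)).card with hr
  have hHM : H.card ≤ M := by
    have h1 : H.card = (univ.filter fun x : Fin n => (x : ℕ) < M).card := by
      refine Finset.card_bij (fun j (_ : j ∈ H) => σ' j) ?_ ?_ ?_
      · intro j hj; simp only [hH, mem_filter, mem_univ, true_and] at hj ⊢; exact hj
      · intro a _ b _ hab; exact σ'.injective hab
      · intro x hx
        simp only [mem_filter, mem_univ, true_and] at hx
        exact ⟨σ'.symm x, by simp [hH, hx], by simp⟩
    rw [h1]
    have h2 : (univ.filter fun x : Fin n => (x : ℕ) < M).card ≤ (Finset.range M).card := by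
      refine Finset.card_le_card_of_injOn (fun x : Fin n => (x : ℕ)) ?_ ?_
      · intro x hx; simp at hx; simpa using hx
      · intro a _ b _ hab; exact Fin.val_injective hab
    simpa using h2
  have hrH : ∀ i ∈ H, r i < H.card := by
    intro i hi
    refine Finset.card_lt_card ((Finset.ssubset_iff_of_subset (Finset.filter_subset _ _)).mpr
      ⟨i, hi, ?_⟩)
    simp
  have hrlt : ∀ i ∈ H, ∀ j ∈ H, σs i < σs j → r i < r j := by
    intro i hi j hj hij
    refine Finset.card_lt_card ((Finset.ssubset_iff_of_subset ?_).mpr ⟨i, ?_, ?_⟩)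
    · intro a ha
      simp only [mem_filter] at ha ⊢
      exact ⟨ha.1, ha.2.trans hij⟩
    · simp only [mem_filter]; exact ⟨hi, hij⟩
    · simp
  set f : Fin n → Fin n := fun i =>
    if h : M ≤ (σ' i : ℕ) then σ' i
    else ⟨r i, lt_of_lt_of_le (hrH i (by simp [hH]; omega))
      ((Finset.card_le_univ H).trans_eq (by simp))⟩ with hf
  have hftail : ∀ i, M ≤ (σ' i : ℕ) → f i = σ' i := fun i hi => by simp [hf, hi]
  have hfhead : ∀ i, (σ' i : ℕ) < M → (f i : ℕ) = r i := fun i hi => by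
    simp only [hf]; rw [dif_neg (by omega)]
  have hfheadlt : ∀ i, (σ' i : ℕ) < M → (f i : ℕ) < M := fun i hi => by
    rw [hfhead i hi]; exact lt_of_lt_of_le (hrH i (by simp [hH, hi])) hHM
  have hinj : Function.Injective f := by
    intro a b hab
    by_cases ha : M ≤ (σ' a : ℕ) <;> by_cases hb : M ≤ (σ' b : ℕ)
    · rw [hftail a ha, hftail b hb] at hab; exact σ'.injective hab
    · exfalso
      have h1 : (f a : ℕ) = (σ' a : ℕ) := by rw [hftail a ha]
      have h2 := hfheadlt b (by omega)
      rw [hab] at h1; omega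
    · exfalso
      have h1 : (f b : ℕ) = (σ' b : ℕ) := by rw [hftail b hb]
      have h2 := hfheadlt a (by omega)
      rw [← hab] at h1; omega
    · have ha' : a ∈ H := by simp [hH]; omega
      have hb' : b ∈ H := by simp [hH]; omega
      by_contra hne
      have hsne : σs a ≠ σs b := fun h => hne (σs.injective h)
      rcases lt_or_gt_of_ne hsne with h | h
      · have hlt := hrlt a ha' b hb' h
        rw [← hfhead a (by omega), ← hfhead b (by omega), hab] at hlt
        omega
      · have hlt := hrlt b hb' a ha' h
        rw [← hfhead a (by omega), ← hfhead b (by omega), hab] at hlt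
        omega
  refine ⟨Equiv.ofBijective f (Finite.injective_iff_bijective.mp hinj), ?_, ?_⟩
  · intro i hi
    show f i = σ' i
    exact hftail i hi
  · intro i j hji hsij
    have hji' : (f j : ℕ) < (f i : ℕ) := hji
    by_cases hi : M ≤ (σ' i : ℕ)
    · refine ⟨hi, ?_⟩
      by_cases hj : M ≤ (σ' j : ℕ)
      · rw [hftail i hi, hftail j hj] at hji'
        exact hji'
      · have h1 := hfheadlt j (by omega)
        have h2 : (f i : ℕ) = (σ' i : ℕ) := by rw [hftail i hi]
        rw [Fin.lt_def]
        omega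
    · exfalso
      by_cases hj : M ≤ (σ' j : ℕ)
      · have h1 := hfheadlt i (by omega)
        have h2 : (f j : ℕ) = (σ' j : ℕ) := by rw [hftail j hj]
        omega
      · have ha' : i ∈ H := by simp [hH]; omega
        have hb' : j ∈ H := by simp [hH]; omega
        have hlt := hrlt i ha' j hb' hsij
        rw [← hfhead i (by omega), ← hfhead j (by omega)] at hlt
        omega

/-- `Score-then-Adjust` is a `(1+ε)`-approximation for top-`k`-list
aggregation: sort candidates by nonincreasing score into `σ'`, then choose the
best permutation `σ` among those agreeing with `σ'` on all candidates of
(1-indexed) rank greater than `m = ⌈(1+1/ε)(k−1)⌉`. -/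
theorem score_then_adjust_ptas {n mm k : ℕ} (ε : ℝ) (hε : 0 < ε)
    (w : Fin mm → ℝ) (hw : ∀ v, 0 ≤ w v) (hw1 : ∑ v, w v = 1)
    (π : Fin mm → Fin n → ℕ∞) (hπ : ∀ v, IsTopList n k (π v))
    (M : ℕ) (hM : M = ⌈(1 + 1 / ε) * ((k : ℝ) - 1)⌉₊)
    (σ' : Equiv.Perm (Fin n))
    (hσ' : ∀ i j : Fin n, score w π j < score w π i → σ' i < σ' j)
    (σ : Equiv.Perm (Fin n))
    (hagree : ∀ i : Fin n, M < (σ' i : ℕ) + 1 → σ i = σ' i)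
    (hbest : ∀ s : Equiv.Perm (Fin n),
      (∀ i : Fin n, M < (σ' i : ℕ) + 1 → s i = σ' i) →
      kendallCost w π σ ≤ kendallCost w π s)
    (σstar : Equiv.Perm (Fin n)) :
    kendallCost w π σ ≤ (1 + ε) * kendallCost w π σstar := by
  classical
  -- the degenerate case k = 0 : all costs vanish
  rcases Nat.eq_zero_or_pos k with hk0 | hk1
  · have hzero : ∀ τ : Equiv.Perm (Fin n), kendallCost w π τ = 0 := by
      intro τ
      have hg : ∀ v, kendallGen τ (π v) = 0 := by
        intro v
        rw [kendallGen, Finset.card_eq_zero, Finset.filter_eq_empty_iff]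
        rintro q - ⟨-, hlt⟩
        have hne : π v q.1 ≠ ⊤ := ne_top_of_lt hlt
        obtain ⟨h1, h2⟩ := (hπ v).1 q.1 hne
        rw [hk0] at h2
        simp only [Nat.cast_zero, le_zero_iff] at h2
        exact absurd (h1.trans h2.le) (by simp)
      simp [kendallCost, hg]
    rw [hzero σ, hzero σstar]
    simp
  -- main case
  have hcard : ∀ v, (univ.filter fun i => π v i ≠ ⊤).card = k :=
    fun v => STA.card_finite_eq (hπ v)
  obtain ⟨s, hs_tail, hs_key⟩ := STA.exists_adjust M σ' σstar
  have h0 : kendallCost w π σ ≤ kendallCost w π s :=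
    hbest s (fun i hi => hs_tail i (by omega))
  set A' := univ.filter (fun i => M ≤ (σ' i : ℕ)) with hA'
  set As := univ.filter (fun i => M ≤ (σstar i : ℕ)) with hAs
  -- score monotonicity between the two tails
  have hscoreA : ∑ i ∈ A', score w π i ≤ ∑ i ∈ As, score w π i := by
    refine STA.sum_le_sum_of_cards _ _ _ ?_ ?_
    · rw [hA', hAs, STA.perm_filter_card σ', STA.perm_filter_card σstar]
    · intro a ha b hb
      by_contra hlt
      push_neg at hlt
      have h1 := hσ' a b hlt
      simp only [hA', mem_filter, mem_univ, true_and, not_le] at ha hb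
      rw [Fin.lt_def] at h1
      omega
  -- upper bound for the adjusted permutation
  have hmain : kendallCost w π s
      ≤ kendallCost w π σstar + ((k:ℝ) - 1) * ∑ i ∈ A', score w π i := by
    have hsplit : ∀ (τ₁ τ₂ : Equiv.Perm (Fin n)),
        kendallCost w π τ₁
          = (∑ i : Fin n, ∑ j : Fin n,
              if (τ₁ j < τ₁ i ∧ τ₂ j < τ₂ i) then pairP w π i j else 0)
          + (∑ i : Fin n, ∑ j : Fin n,
              if (τ₁ j < τ₁ i ∧ τ₂ i < τ₂ j) then pairP w π i j else 0) := by
      intro τ₁ τ₂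
      rw [STA.cost_eq, ← Finset.sum_add_distrib]
      refine Finset.sum_congr rfl fun i _ => ?_
      rw [← Finset.sum_add_distrib]
      refine Finset.sum_congr rfl fun j _ => ?_
      by_cases h : τ₁ j < τ₁ i
      · have hne : i ≠ j := fun he => absurd h (by rw [he]; exact lt_irrefl _)
        have hne2 : τ₂ i ≠ τ₂ j := fun he => hne (τ₂.injective he)
        rcases lt_or_gt_of_ne hne2 with h2 | h2
        · rw [if_pos h, if_neg (fun hc => absurd hc.2 (lt_asymm h2)), if_pos ⟨h, h2⟩]
          exact (zero_add _).symm
        · rw [if_pos h, if_pos ⟨h, h2⟩, if_neg (fun hc => absurd hc.2 (lt_asymm h2))]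
          exact (add_zero _).symm
      · rw [if_neg h, if_neg (fun hc => h hc.1), if_neg (fun hc => h hc.1)]
        exact (zero_add 0).symm
    have hcs := hsplit s σstar
    have hcstar := hsplit σstar s
    -- first summands agree
    have hfirst : (∑ i : Fin n, ∑ j : Fin n,
          if (s j < s i ∧ σstar j < σstar i) then pairP w π i j else 0)
        = (∑ i : Fin n, ∑ j : Fin n,
          if (σstar j < σstar i ∧ s j < s i) then pairP w π i j else 0) :=
      Finset.sum_congr rfl fun i _ => Finset.sum_congr rfl fun j _ =>
        if_congr and_comm rfl rfl
    -- swap the second summand of σstar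
    have hswap : (∑ i : Fin n, ∑ j : Fin n,
          if (σstar j < σstar i ∧ s i < s j) then pairP w π i j else 0)
        = (∑ i : Fin n, ∑ j : Fin n,
          if (s j < s i ∧ σstar i < σstar j) then pairP w π j i else 0) := by
      rw [Finset.sum_comm]
      exact Finset.sum_congr rfl fun i _ => Finset.sum_congr rfl fun j _ =>
        if_congr and_comm rfl rfl
    -- the disagreement sum is bounded
    have hD : (∑ i : Fin n, ∑ j : Fin n,
          if (s j < s i ∧ σstar i < σstar j)
            then pairP w π i j - pairP w π j i else 0)
        ≤ ((k:ℝ) - 1) * ∑ i ∈ A', score w π i := by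
      have hinner : ∀ i : Fin n, (∑ j : Fin n,
            if (s j < s i ∧ σstar i < σstar j)
              then pairP w π i j - pairP w π j i else 0)
          ≤ (if M ≤ (σ' i : ℕ) then ((k:ℝ) - 1) * score w π i else 0) := by
        intro i
        by_cases hi : M ≤ (σ' i : ℕ)
        · rw [if_pos hi]
          have step1 : (∑ j : Fin n,
                if (s j < s i ∧ σstar i < σstar j)
                  then pairP w π i j - pairP w π j i else 0)
              ≤ ∑ j : Fin n,
                if (s j < s i ∧ σstar i < σstar j) then bothF w π i j else 0 := by
            refine Finset.sum_le_sum fun j _ => ?_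
            by_cases hc : s j < s i ∧ σstar i < σstar j
            · rw [if_pos hc, if_pos hc]
              obtain ⟨-, hji⟩ := hs_key i j hc.1 hc.2
              have hsc : score w π i ≤ score w π j := by
                by_contra hlt
                push_neg at hlt
                exact absurd (hσ' i j hlt) (lt_asymm hji)
              have := STA.pairP_sub_le w π hw i j
              linarith
            · rw [if_neg hc, if_neg hc]
          have step2 : (∑ j : Fin n,
                if (s j < s i ∧ σstar i < σstar j) then bothF w π i j else 0)
              ≤ ∑ j ∈ univ.erase i, bothF w π i j := by
            rw [← Finset.sum_filter]
            refine Finset.sum_le_sum_of_subset_of_nonneg ?_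
              (fun j _ _ => STA.bothF_nonneg w π hw i j)
            intro j hj
            simp only [mem_filter, mem_univ, true_and] at hj
            refine Finset.mem_erase.mpr ⟨?_, Finset.mem_univ j⟩
            intro he
            rw [he] at hj
            exact absurd hj.1 (lt_irrefl _)
          exact step1.trans (step2.trans (STA.sumF_le w π hw hcard i))
        · rw [if_neg hi]
          refine le_of_eq (Finset.sum_eq_zero fun j _ => ?_)
          rw [if_neg]
          intro hc
          exact hi (hs_key i j hc.1 hc.2).1
      calc (∑ i : Fin n, ∑ j : Fin n,
            if (s j < s i ∧ σstar i < σstar j)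
              then pairP w π i j - pairP w π j i else 0)
          ≤ ∑ i : Fin n, (if M ≤ (σ' i : ℕ) then ((k:ℝ) - 1) * score w π i else 0) :=
            Finset.sum_le_sum fun i _ => hinner i
        _ = ((k:ℝ) - 1) * ∑ i ∈ A', score w π i := by
            rw [← Finset.sum_filter, Finset.mul_sum]
    -- combine
    have hcomb : (∑ i : Fin n, ∑ j : Fin n,
          if (s j < s i ∧ σstar i < σstar j) then pairP w π i j else 0)
        - (∑ i : Fin n, ∑ j : Fin n,
          if (s j < s i ∧ σstar i < σstar j) then pairP w π j i else 0)
        = (∑ i : Fin n, ∑ j : Fin n,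
          if (s j < s i ∧ σstar i < σstar j)
            then pairP w π i j - pairP w π j i else 0) := by
      rw [← Finset.sum_sub_distrib]
      refine Finset.sum_congr rfl fun i _ => ?_
      rw [← Finset.sum_sub_distrib]
      refine Finset.sum_congr rfl fun j _ => ?_
      split_ifs <;> ring
    linarith [hcs, hcstar, hfirst, hswap, hD, hcomb]
  -- lower bound for the optimum
  have hlow : ((M:ℝ) + 1 - k) * ∑ i ∈ As, score w π i ≤ kendallCost w π σstar := by
    have hv := fun v => STA.vote_lower (M := M) σstar (π v) (hcard v)
    have hstep : ∑ v, w v * (∑ i : Fin n,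
          if (M ≤ (σstar i : ℕ) ∧ π v i ≠ ⊤) then ((M:ℝ) + 1 - k) else 0)
        ≤ kendallCost w π σstar := by
      unfold kendallCost
      exact Finset.sum_le_sum fun v _ => mul_le_mul_of_nonneg_left (hv v) (hw v)
    refine le_trans (le_of_eq ?_) hstep
    have hper : ∀ y : Fin n, (∑ x, w x * if (M ≤ (σstar y : ℕ) ∧ π x y ≠ ⊤)
          then ((M:ℝ) + 1 - k) else 0)
        = (if M ≤ (σstar y : ℕ) then ((M:ℝ) + 1 - k) * score w π y else 0) := by
      intro y
      by_cases hy : M ≤ (σstar y : ℕ)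
      · rw [if_pos hy, score, Finset.mul_sum]
        refine Finset.sum_congr rfl fun x _ => ?_
        by_cases hf : π x y ≠ ⊤
        · rw [if_pos (show M ≤ (σstar y : ℕ) ∧ π x y ≠ ⊤ from ⟨hy, hf⟩), if_pos hf]; ring
        · rw [if_neg (fun hc => hf hc.2), if_neg hf]; ring
      · rw [if_neg hy]
        refine Finset.sum_eq_zero fun x _ => ?_
        rw [if_neg (fun hc => hy hc.1), mul_zero]
    simp_rw [Finset.mul_sum]
    rw [Finset.sum_comm]
    rw [show (∑ y : Fin n, ∑ x : Fin mm, w x * if (M ≤ (σstar y : ℕ) ∧ π x y ≠ ⊤)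
          then ((M:ℝ) + 1 - k) else 0)
        = ∑ y : Fin n, (if M ≤ (σstar y : ℕ) then ((M:ℝ) + 1 - k) * score w π y else 0)
      from Finset.sum_congr rfl fun y _ => hper y]
    exact Finset.sum_filter _ _
  -- final arithmetic
  have hk1R : (1:ℝ) ≤ k := by exact_mod_cast hk1
  have harith : (k:ℝ) - 1 ≤ ε * ((M:ℝ) + 1 - k) := by
    have hle : (1 + 1/ε) * ((k:ℝ) - 1) ≤ (M:ℝ) := by rw [hM]; exact Nat.le_ceil _
    have h2 : ε * ((1 + 1/ε) * ((k:ℝ) - 1)) ≤ ε * M := mul_le_mul_of_nonneg_left hle hε.le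
    have h3 : ε * ((1 + 1/ε) * ((k:ℝ) - 1)) = ε * ((k:ℝ) - 1) + ((k:ℝ) - 1) := by
      field_simp
    have h4 : ε * ((M:ℝ) + 1 - k) = ε * (M:ℝ) - ε * ((k:ℝ) - 1) := by ring
    linarith
  have hsA_nonneg : 0 ≤ ∑ i ∈ As, score w π i :=
    Finset.sum_nonneg fun i _ => STA.score_nonneg w π hw i
  have hstep2 : ((k:ℝ) - 1) * ∑ i ∈ As, score w π i ≤ ε * kendallCost w π σstar := by
    calc ((k:ℝ) - 1) * ∑ i ∈ As, score w π i
        ≤ (ε * ((M:ℝ) + 1 - k)) * ∑ i ∈ As, score w π i :=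
          mul_le_mul_of_nonneg_right harith hsA_nonneg
      _ = ε * (((M:ℝ) + 1 - k) * ∑ i ∈ As, score w π i) := by ring
      _ ≤ ε * kendallCost w π σstar := mul_le_mul_of_nonneg_left hlow hε.le
  have h5 : ((k:ℝ) - 1) * ∑ i ∈ A', score w π i
      ≤ ((k:ℝ) - 1) * ∑ i ∈ As, score w π i :=
    mul_le_mul_of_nonneg_left hscoreA (by linarith)
  have hexp : (1 + ε) * kendallCost w π σstar
      = kendallCost w π σstar + ε * kendallCost w π σstar := by ring
  linarith
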